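/- For any m, n ≥ 1, the projection q : S^m × S^n → S^m ∧ S^n ≃ S^{m+n} collapsing the wedge S^m ∨ S^n induces the trivial homomorphism q_* : π_i(S^m × S^n) → π_i(S^{m+n}) for every i; that is, q ∈ 𝒵^∞(S^m × S^n, S^{m+n}). -/

import Mathlib

open scoped Manifold TensorProduct

noncomputable section

/-! ### Pointed spaces and based maps -/

/-- A pointed topological space. -/
structure PtSpace : Type 1 where
  /-- underlying type -/
  carrier : Type
  [top : TopologicalSpace carrier]
  /-- base point -/
  pt : carrier

attribute [instance] PtSpace.top

instance : CoeSort PtSpace Type := ⟨PtSpace.carrier⟩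

/-- The pointed space on a type with a chosen base point. -/
@[reducible] def PtSpace.of (G : Type) [TopologicalSpace G] (g : G) : PtSpace :=
  { carrier := G, pt := g }

/-- A based (pointed) continuous map. -/
@[ext] structure PtMap (X Y : PtSpace) where
  toCM : C(X, Y)
  map_pt : toCM X.pt = Y.pt

instance (X Y : PtSpace) : FunLike (PtMap X Y) X Y where
  coe f := f.toCM
  coe_injective f g h := by cases f; cases g; simp_all [ContinuousMap.ext_iff, funext_iff]

namespace PtMap

/-- identity -/
def id (X : PtSpace) : PtMap X X := ⟨ContinuousMap.id _, rfl⟩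

/-- composition of based maps -/
def comp {X Y Z : PtSpace} (g : PtMap Y Z) (f : PtMap X Y) : PtMap X Z :=
  ⟨g.toCM.comp f.toCM, by simp [f.map_pt, g.map_pt]⟩

/-- the constant based map -/
def const (X Y : PtSpace) : PtMap X Y := ⟨ContinuousMap.const _ Y.pt, rfl⟩

end PtMap

/-- Based homotopy: homotopy relative to the base point. -/
def PtHomotopic {X Y : PtSpace} (f g : PtMap X Y) : Prop :=
  ContinuousMap.HomotopicRel f.toCM g.toCM {X.pt}

theorem PtHomotopic.refl {X Y : PtSpace} (f : PtMap X Y) : PtHomotopic f f :=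
  ContinuousMap.HomotopicRel.refl _

theorem PtHomotopic.symm {X Y : PtSpace} {f g : PtMap X Y} (h : PtHomotopic f g) :
    PtHomotopic g f := ContinuousMap.HomotopicRel.symm h

theorem PtHomotopic.trans {X Y : PtSpace} {f g k : PtMap X Y} (h : PtHomotopic f g)
    (h' : PtHomotopic g k) : PtHomotopic f k := ContinuousMap.HomotopicRel.trans h h'

/-- A based map is nullhomotopic if it is based homotopic to the constant map. -/
def PtNullhomotopic {X Y : PtSpace} (f : PtMap X Y) : Prop :=
  PtHomotopic f (PtMap.const X Y)

/-- The `n`-sphere as a pointed space. -/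
def pSphere (n : ℕ) : PtSpace :=
  { carrier := Metric.sphere (0 : EuclideanSpace ℝ (Fin (n + 1))) 1
    pt := ⟨EuclideanSpace.single 0 1, by simp [EuclideanSpace.norm_single]⟩ }

/-! ### The semigroups `𝒵ⁿ(X,Y)` and their nilpotency -/

/-- `f ∈ 𝒵ⁿ(X, Y)` : `f` induces the trivial homomorphism on homotopy groups `π_i`
for all `1 ≤ i ≤ n`, expressed by the condition that `f ∘ g` is (based) nullhomotopic
for every based map `g : Sⁱ → X`. -/
def zClass (n : ℕ∞) {X Y : PtSpace} (f : PtMap X Y) : Prop :=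
  ∀ i : ℕ, 1 ≤ i → (i : ℕ∞) ≤ n → ∀ g : PtMap (pSphere i) X, PtNullhomotopic (f.comp g)

/-- The semigroup `𝒵ⁿ(X)` (as a set of based self-maps; the semigroup operation is
composition, which is compatible with `compList` below). -/
def ZSet (n : ℕ∞) (X : PtSpace) : Set (PtMap X X) := {f | zClass n f}

/-- iterated composite of a list of self-maps -/
def compList {X : PtSpace} : List (PtMap X X) → PtMap X X
  | [] => PtMap.id X
  | f :: l => f.comp (compList l)

/-- The set of `t ≥ 1` such that every composite of `t` elements of `𝒵ⁿ(X)` is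
nullhomotopic. -/
def nilSet (n : ℕ∞) (X : PtSpace) : Set ℕ :=
  {t | 1 ≤ t ∧ ∀ l : List (PtMap X X), l.length = t →
    (∀ f ∈ l, f ∈ ZSet n X) → PtNullhomotopic (compList l)}

/-- The nilpotency of the semigroup `𝒵ⁿ(X)`: the least `t ≥ 1` such that all composites
of `t` elements of `𝒵ⁿ(X)` are nullhomotopic (`⊤` if there is no such `t`).
`tNil n X` for `n = dim X` is `t(X)`, and `tNil ⊤ X` is `t_∞(X)`. -/
def tNil (n : ℕ∞) (X : PtSpace) : ℕ∞ :=
  sInf ((Nat.cast : ℕ → ℕ∞) '' nilSet n X)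

/-! ### Homotopy classes -/

/-- based homotopy as a setoid -/
def ptSetoid (X Y : PtSpace) : Setoid (PtMap X Y) where
  r := PtHomotopic
  iseqv := ⟨PtHomotopic.refl, PtHomotopic.symm, PtHomotopic.trans⟩

/-- `[X, Y]`, the set of based homotopy classes of based maps `X → Y`. -/
def PtCls (X Y : PtSpace) : Type := Quotient (ptSetoid X Y)

/-- the homotopy class of a based map -/
def PtMap.cls {X Y : PtSpace} (f : PtMap X Y) : PtCls X Y := Quotient.mk (ptSetoid X Y) f

/-- `𝒵ⁿ(X)` as a set of homotopy classes. -/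
def ZCls (n : ℕ∞) (X : PtSpace) : Set (PtCls X X) := PtMap.cls '' ZSet n X

/-- Right whiskering of a based homotopy. -/
theorem PtHomotopic.compRight {X Y Z : PtSpace} {f g : PtMap Y Z} (h : PtHomotopic f g)
    (q : PtMap X Y) : PtHomotopic (f.comp q) (g.comp q) := by
  obtain ⟨H⟩ := h
  exact ⟨{ toFun := fun p => H (p.1, q.toCM p.2)
           continuous_toFun := H.continuous.comp
             (continuous_fst.prodMk (q.toCM.continuous.comp continuous_snd))
           map_zero_left := fun x => by simp [PtMap.comp]
           map_one_left := fun x => by simp [PtMap.comp]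
           prop' := fun t x hx => by
             have hx' : x = X.pt := hx
             subst hx'
             show H (t, q.toCM X.pt) = (f.comp q).toCM X.pt
             rw [q.map_pt]
             show H (t, Y.pt) = f.toCM (q.toCM X.pt)
             rw [q.map_pt]
             exact H.eq_fst t rfl }⟩

/-- Left whiskering of a based homotopy. -/
theorem PtHomotopic.compLeft {X Y Z : PtSpace} {f g : PtMap X Y} (h : PtHomotopic f g)
    (p : PtMap Y Z) : PtHomotopic (p.comp f) (p.comp g) :=
  h.map fun H => H.compContinuousMap p.toCM

/-- precomposition on homotopy classes, `q^* : [Y, Z] → [X, Z]` -/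
def PtCls.precomp {X Y : PtSpace} (q : PtMap X Y) {Z : PtSpace} :
    PtCls Y Z → PtCls X Z :=
  Quotient.map (fun f => f.comp q) (fun _ _ h => h.compRight q)

/-- postcomposition on homotopy classes, `p_* : [X, Y] → [X, Z]` -/
def PtCls.postcomp {Y Z : PtSpace} (p : PtMap Y Z) {X : PtSpace} :
    PtCls X Y → PtCls X Z :=
  Quotient.map (fun f => p.comp f) (fun _ _ h => h.compLeft p)


/-! ### Further constructions on pointed spaces -/

/-- product of pointed spaces -/
def PtSpace.prod (X Y : PtSpace) : PtSpace :=
  { carrier := X.carrier × Y.carrier, pt := (X.pt, Y.pt) }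

/-- the space obtained from `X` by collapsing a subset `A` to a point -/
def PtSpace.collapse (X : PtSpace) (A : Set X.carrier) : PtSpace :=
  { carrier := Quot (fun a b : X.carrier => a ∈ A ∧ b ∈ A)
    pt := Quot.mk _ X.pt }

/-- the collapsing map `X → X/A` -/
def PtSpace.collapseMap (X : PtSpace) (A : Set X.carrier) : PtMap X (X.collapse A) :=
  ⟨⟨Quot.mk _, continuous_quot_mk⟩, rfl⟩

/-- the wedge `X ∨ Y` -/
def ptWedge (X Y : PtSpace) : PtSpace :=
  { carrier := Quot (fun a b : X.carrier ⊕ Y.carrier =>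
      (a = Sum.inl X.pt ∨ a = Sum.inr Y.pt) ∧ (b = Sum.inl X.pt ∨ b = Sum.inr Y.pt))
    pt := Quot.mk _ (Sum.inl X.pt) }

/-- projection of the wedge onto its first factor -/
def ptWedgeProjLeft (X Y : PtSpace) : PtMap (ptWedge X Y) X :=
  ⟨⟨Quot.lift (Sum.elim id fun _ => X.pt) (by
      rintro a b ⟨ha, hb⟩
      rcases ha with rfl | rfl <;> rcases hb with rfl | rfl <;> rfl),
    continuous_quot_lift _ (Continuous.sumElim continuous_id continuous_const)⟩, rfl⟩

/-- the smash product `X ∧ Y`, the quotient of `X × Y` by the wedge -/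
def ptSmash (X Y : PtSpace) : PtSpace :=
  { carrier := Quot (fun a b : X.carrier × Y.carrier =>
      (a.1 = X.pt ∨ a.2 = Y.pt) ∧ (b.1 = X.pt ∨ b.2 = Y.pt))
    pt := Quot.mk _ (X.pt, Y.pt) }

/-- the projection `X × Y → X ∧ Y` -/
def ptSmashProj (X Y : PtSpace) : PtMap (X.prod Y) (ptSmash X Y) :=
  ⟨⟨Quot.mk _, continuous_quot_mk⟩, rfl⟩

/-- the reduced suspension `ΣX` -/
def ptSusp (X : PtSpace) : PtSpace :=
  { carrier := Quot (fun a b : X.carrier × unitInterval =>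
      (a.2 = 0 ∨ a.2 = 1 ∨ a.1 = X.pt) ∧ (b.2 = 0 ∨ b.2 = 1 ∨ b.1 = X.pt))
    pt := Quot.mk _ (X.pt, 0) }

/-- the reduced mapping cone of `f : A → B` -/
def ptCone {A B : PtSpace} (f : PtMap A B) : PtSpace :=
  { carrier := Quot (fun x y : (A.carrier × unitInterval) ⊕ B.carrier =>
      (∃ a : A.carrier, x = Sum.inl (a, 1) ∧ y = Sum.inr (f.toCM a)) ∨
      ((∃ a t, x = Sum.inl (a, t) ∧ (t = 0 ∨ a = A.pt)) ∧
        ∃ a t, y = Sum.inl (a, t) ∧ (t = 0 ∨ a = A.pt)))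
    pt := Quot.mk _ (Sum.inr B.pt) }

/-- `f : X → Y` is a based homotopy equivalence -/
def IsPtHomotopyEquiv {X Y : PtSpace} (f : PtMap X Y) : Prop :=
  ∃ g : PtMap Y X, PtHomotopic (g.comp f) (PtMap.id X) ∧ PtHomotopic (f.comp g) (PtMap.id Y)

/-- `X` and `Y` are based homotopy equivalent -/
def PtHomotopyEquiv (X Y : PtSpace) : Prop :=
  ∃ f : PtMap X Y, IsPtHomotopyEquiv f

/-! ### Pointwise group structure on `[X, G]` for a topological group `G` -/

section PtGrp

variable {X : PtSpace} {G : Type} [TopologicalSpace G] [Group G] [IsTopologicalGroup G]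

/-- pointwise product of based maps into a topological group (based at the identity) -/
def PtMap.mul (f g : PtMap X (PtSpace.of G 1)) : PtMap X (PtSpace.of G 1) :=
  ⟨⟨fun x => f.toCM x * g.toCM x, f.toCM.continuous.mul g.toCM.continuous⟩, by
    show f.toCM X.pt * g.toCM X.pt = 1
    rw [f.map_pt, g.map_pt]; exact mul_one 1⟩

/-- pointwise inverse -/
def PtMap.inv (f : PtMap X (PtSpace.of G 1)) : PtMap X (PtSpace.of G 1) :=
  ⟨⟨fun x => (f.toCM x)⁻¹, f.toCM.continuous.inv⟩, by
    show (f.toCM X.pt)⁻¹ = 1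
    rw [f.map_pt]; exact inv_one⟩

/-- pointwise power -/
def PtMap.npow (f : PtMap X (PtSpace.of G 1)) (k : ℕ) : PtMap X (PtSpace.of G 1) :=
  ⟨⟨fun x => (f.toCM x) ^ k, f.toCM.continuous.pow k⟩, by
    show (f.toCM X.pt) ^ k = 1
    rw [f.map_pt]; exact one_pow k⟩

theorem PtHomotopic.mul {f f' g g' : PtMap X (PtSpace.of G 1)} (h₁ : PtHomotopic f f')
    (h₂ : PtHomotopic g g') : PtHomotopic (f.mul g) (f'.mul g') := by
  obtain ⟨H₁⟩ := h₁; obtain ⟨H₂⟩ := h₂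
  exact ⟨{ toFun := fun p => H₁ p * H₂ p
           continuous_toFun := H₁.continuous.mul H₂.continuous
           map_zero_left := fun x => by simp [PtMap.mul]
           map_one_left := fun x => by simp [PtMap.mul]
           prop' := fun t x hx => by
             have hx' : x = X.pt := hx
             subst hx'
             show H₁ (t, X.pt) * H₂ (t, X.pt) = (f.mul g).toCM X.pt
             rw [H₁.eq_fst t rfl, H₂.eq_fst t rfl]; rfl }⟩

theorem PtHomotopic.inv {f f' : PtMap X (PtSpace.of G 1)} (h : PtHomotopic f f') :
    PtHomotopic f.inv f'.inv := by
  obtain ⟨H⟩ := h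
  exact ⟨{ toFun := fun p => (H p)⁻¹
           continuous_toFun := H.continuous.inv
           map_zero_left := fun x => by simp [PtMap.inv]
           map_one_left := fun x => by simp [PtMap.inv]
           prop' := fun t x hx => by
             have hx' : x = X.pt := hx
             subst hx'
             show (H (t, X.pt))⁻¹ = f.inv.toCM X.pt
             rw [H.eq_fst t rfl]; rfl }⟩

instance : Mul (PtCls X (PtSpace.of G 1)) :=
  ⟨Quotient.map₂ PtMap.mul fun _ _ h₁ _ _ h₂ => h₁.mul h₂⟩

instance : One (PtCls X (PtSpace.of G 1)) := ⟨(PtMap.const X (PtSpace.of G 1)).cls⟩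

instance : Inv (PtCls X (PtSpace.of G 1)) :=
  ⟨Quotient.map PtMap.inv fun _ _ h => h.inv⟩

/-- `[X, G]` is a group under pointwise multiplication. -/
instance : Group (PtCls X (PtSpace.of G 1)) where
  mul_assoc a b c := by
    induction a using Quotient.inductionOn with | _ a =>
    induction b using Quotient.inductionOn with | _ b =>
    induction c using Quotient.inductionOn with | _ c =>
    exact congrArg (Quotient.mk _) (by
      apply PtMap.ext; exact ContinuousMap.ext fun x => mul_assoc _ _ _)
  one_mul a := by
    induction a using Quotient.inductionOn with | _ a =>
    exact congrArg (Quotient.mk _) (by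
      apply PtMap.ext; exact ContinuousMap.ext fun x => one_mul _)
  mul_one a := by
    induction a using Quotient.inductionOn with | _ a =>
    exact congrArg (Quotient.mk _) (by
      apply PtMap.ext; exact ContinuousMap.ext fun x => mul_one _)
  inv_mul_cancel a := by
    induction a using Quotient.inductionOn with | _ a =>
    exact congrArg (Quotient.mk _) (by
      apply PtMap.ext; exact ContinuousMap.ext fun x => inv_mul_cancel _)

end PtGrp

/-! ### Finite CW structures -/

/-- A finite CW presentation of a space: finitely many cells with characteristic maps,
whose open cells partition the space, each cell boundary landing in cells of strictly
smaller dimension. Together with compactness and Hausdorffness (see `IsFiniteCW`)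
this is exactly the classical notion of a finite CW complex. -/
structure FiniteCWPres (X : PtSpace) where
  ι : Type
  [fin : Finite ι]
  cdim : ι → ℕ
  char : ∀ j, C(Metric.closedBall (0 : EuclideanSpace ℝ (Fin (cdim j))) 1, X.carrier)
  injOn : ∀ j, Set.InjOn (char j) {v | ‖(v : EuclideanSpace ℝ (Fin (cdim j)))‖ < 1}
  disjoint : ∀ j k, j ≠ k → Disjoint
    (char j '' {v | ‖(v : EuclideanSpace ℝ (Fin (cdim j)))‖ < 1})
    (char k '' {v | ‖(v : EuclideanSpace ℝ (Fin (cdim k)))‖ < 1})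
  cover : ∀ x : X.carrier, ∃ j, ∃ v : Metric.closedBall (0 : EuclideanSpace ℝ (Fin (cdim j))) 1,
    ‖(v : EuclideanSpace ℝ (Fin (cdim j)))‖ < 1 ∧ char j v = x
  boundary : ∀ j, ∀ v : Metric.closedBall (0 : EuclideanSpace ℝ (Fin (cdim j))) 1,
    ‖(v : EuclideanSpace ℝ (Fin (cdim j)))‖ = 1 →
    ∃ k, ∃ w : Metric.closedBall (0 : EuclideanSpace ℝ (Fin (cdim k))) 1,
      cdim k < cdim j ∧ ‖(w : EuclideanSpace ℝ (Fin (cdim k)))‖ < 1 ∧ char k w = char j v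

/-- `X` is a finite CW complex of dimension `d`. -/
def IsFiniteCW (X : PtSpace) (d : ℕ) : Prop :=
  CompactSpace X.carrier ∧ T2Space X.carrier ∧
    ∃ P : FiniteCWPres X, (∀ j, P.cdim j ≤ d) ∧ ∃ j, P.cdim j = d

/-! ### Nilpotent spaces -/

/-- Two homotopy classes in `π_n(X, x)` are freely related if they have representatives
that are freely homotopic (i.e. homotopic through maps collapsing the cube boundary to a
single, possibly moving, point).  This holds for `a` and `b` iff `b = γ · a` for some `γ`
in the fundamental group, so it encodes the orbits of the `π₁`-action on `π_n`. -/
def FreelyRelated (n : ℕ) (X : Type) [TopologicalSpace X] (x : X)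
    (A B : HomotopyGroup (Fin n) X x) : Prop :=
  ∃ p q : GenLoop (Fin n) X x,
    Quotient.mk (GenLoop.Homotopic.setoid (Fin n) x) p = A ∧
    Quotient.mk (GenLoop.Homotopic.setoid (Fin n) x) q = B ∧
    ∃ H : ContinuousMap.Homotopy p.1 q.1,
      ∀ (t : unitInterval) y z, y ∈ Cube.boundary (Fin n) → z ∈ Cube.boundary (Fin n) →
        H (t, y) = H (t, z)

/-- The lower central series of the action of the fundamental group on `π_{n+2}(X, x)`:
`Γ⁰ = π_{n+2}` and `Γ^{k+1}` is generated by the elements `(γ · a) * a⁻¹` with `a ∈ Γᵏ`. -/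
def actionLowerCentralSeries (n : ℕ) (X : Type) [TopologicalSpace X] (x : X) :
    ℕ → Subgroup (HomotopyGroup (Fin (n + 2)) X x)
  | 0 => ⊤
  | k + 1 => Subgroup.closure
      {g | ∃ a b, a ∈ actionLowerCentralSeries n X x k ∧ FreelyRelated (n + 2) X x a b ∧
        g = b * a⁻¹}

/-- A nilpotent space: path-connected, with nilpotent fundamental group acting
nilpotently on all higher homotopy groups. -/
def IsNilpotentSpace (X : PtSpace) : Prop :=
  PathConnectedSpace X.carrier ∧
  Group.IsNilpotent (FundamentalGroup X.carrier X.pt) ∧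
  ∀ n : ℕ, ∃ k, actionLowerCentralSeries n X.carrier X.pt k = ⊥

/-! ### Localization of spaces -/

/-- All homotopy groups of `Z` are `P`-local (`P` a set of primes): for every prime
`q ∉ P` the `q`-th power map on `π_n(Z)` is bijective. -/
def IsPLocalSpace (P : Set ℕ) (Z : PtSpace) : Prop :=
  ∀ n : ℕ, ∀ q : ℕ, q.Prime → q ∉ P →
    Function.Bijective fun g : HomotopyGroup (Fin (n + 1)) Z.carrier Z.pt => g ^ q

/-- `e : X → Y` is a `P`-localization of `X` (`P` a set of primes): `Y` is `P`-local and
`e` is universal (up to homotopy) among based maps to `P`-local spaces.  For `P = {p}`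
this is localization at the prime `p`; for `P = ∅` it is rationalization. -/
def IsPLocalization (P : Set ℕ) {X Y : PtSpace} (e : PtMap X Y) : Prop :=
  IsPLocalSpace P Y ∧
  ∀ Z : PtSpace, IsPLocalSpace P Z →
    (∀ g : PtMap X Z, ∃ h : PtMap Y Z, PtHomotopic (h.comp e) g) ∧
    ∀ h h' : PtMap Y Z, PtHomotopic (h.comp e) (h'.comp e) → PtHomotopic h h'

/-! ### Misc notions -/

/-- `G` contains a torus of dimension `k` (a continuously and injectively embedded copy
of `(ℝ/ℤ)ᵏ`).  For a compact Lie group, the rank is the largest such `k`. -/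
def HasTorus (G : Type) [TopologicalSpace G] [Group G] (k : ℕ) : Prop :=
  ∃ f : (Fin k → AddCircle (1 : ℝ)) → G,
    Continuous f ∧ Function.Injective f ∧ ∀ a b, f (a + b) = f a * f b

/-- `q : G → Sᴺ` is the pinch map onto the top cell: it collapses a proper closed subset
`C` (the lower skeleton) containing the base point to the base point of the sphere and is
injective on the complement, an open `N`-cell, which maps onto the complement of the base
point. -/
def IsCellPinch {G : PtSpace} {N : ℕ} (q : PtMap G (pSphere N)) : Prop :=
  Topology.IsQuotientMap q.toCM ∧
  ∃ C : Set G.carrier, IsClosed C ∧ G.pt ∈ C ∧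
    (∀ x ∈ C, q.toCM x = (pSphere N).pt) ∧
    Set.InjOn q.toCM Cᶜ ∧
    (∀ x ∈ Cᶜ, q.toCM x ≠ (pSphere N).pt) ∧
    Nonempty (Homeomorph (↥(Cᶜ)) (↥(Metric.ball (0 : EuclideanSpace ℝ (Fin N)) 1)))

/-- the total dimension of the rational homotopy of `X` (for a `1`-connected finite
`H`-space this is its rank) -/
def ratHomotopyRank (X : PtSpace) : ℕ :=
  ∑ᶠ n : ℕ,
    Module.finrank ℚ
      (ℚ ⊗[ℤ] Additive (HomotopyGroup (Fin (n + 2)) X.carrier X.pt))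

/-- `E` is an Eilenberg–MacLane space `K(ℚ, m)` (`m ≥ 1`): path-connected, `π_m(E) ≅ ℚ`
and all other homotopy groups vanish. -/
def IsEMRat (E : PtSpace) (m : ℕ) : Prop :=
  1 ≤ m ∧
  (∀ i : ℕ, 1 ≤ i → i ≠ m → ∀ g : PtMap (pSphere i) E, PtNullhomotopic g) ∧
  PathConnectedSpace E.carrier ∧
  Nonempty (HomotopyGroup (Fin (m - 1 + 1)) E.carrier E.pt ≃* Multiplicative ℚ)

/-! ### Auxiliary geometry on spheres for Statement 13 -/

open scoped RealInnerProductSpace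

namespace Stmt13Aux

/-- ambient Euclidean space -/
abbrev EE (i : ℕ) := EuclideanSpace ℝ (Fin (i + 1))

def pE (i : ℕ) : EE i := EuclideanSpace.single 0 1

def qE (i : ℕ) : EE i := EuclideanSpace.single (Fin.last i) 1

lemma norm_pE (i : ℕ) : ‖pE i‖ = 1 := by simp [pE]

lemma norm_qE (i : ℕ) : ‖qE i‖ = 1 := by simp [qE]

lemma inner_pE_pE (i : ℕ) : ⟪pE i, pE i⟫ = 1 := by
  rw [real_inner_self_eq_norm_sq, norm_pE]; norm_num

lemma inner_pE_qE (i : ℕ) (hi : 1 ≤ i) : ⟪pE i, qE i⟫ = 0 := by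
  have h : ¬((0 : Fin (i + 1)) = Fin.last i) := by
    simp only [Fin.ext_iff, Fin.val_last, Fin.val_zero]
    omega
  have h2 : (pE i : EE i) = EuclideanSpace.single 0 ((1 : ℝ) : ℝ) := rfl
  rw [h2, EuclideanSpace.inner_single_left]
  simp [qE, EuclideanSpace.single_apply, h]

lemma inner_qE_pE (i : ℕ) (hi : 1 ≤ i) : ⟪qE i, pE i⟫ = 0 := by
  rw [real_inner_comm]; exact inner_pE_qE i hi

/-- reflection in the hyperplane orthogonal to `u` -/
def refl (i : ℕ) (u v : EE i) : EE i := v - (2 * ⟪v, u⟫) • u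

lemma norm_refl (i : ℕ) (u v : EE i) (hu : ‖u‖ = 1) : ‖refl i u v‖ = ‖v‖ := by
  have h : ‖refl i u v‖ ^ 2 = ‖v‖ ^ 2 := by
    rw [refl, norm_sub_sq_real, real_inner_smul_right, norm_smul]
    rw [Real.norm_eq_abs, hu]
    rw [mul_pow, sq_abs]
    ring
  have h1 := congrArg Real.sqrt h
  rwa [Real.sqrt_sq (norm_nonneg _), Real.sqrt_sq (norm_nonneg _)] at h1

lemma inner_refl (i : ℕ) (u v : EE i) (hu : ‖u‖ = 1) :
    ⟪refl i u v, u⟫ = -⟪v, u⟫ := by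
  rw [refl, inner_sub_left, real_inner_smul_left, real_inner_self_eq_norm_sq, hu]
  ring

lemma refl_refl (i : ℕ) (u v : EE i) (hu : ‖u‖ = 1) : refl i u (refl i u v) = v := by
  rw [refl, inner_refl i u v hu]
  rw [refl]
  rw [mul_neg, neg_smul, sub_neg_eq_add, sub_add_cancel]

lemma continuous_refl (i : ℕ) {X : Type*} [TopologicalSpace X] {u v : X → EE i}
    (hu : Continuous u) (hv : Continuous v) :
    Continuous fun x => refl i (u x) (v x) := by
  unfold refl
  exact hv.sub ((continuous_const.mul (hv.inner hu) :
    Continuous fun x => 2 * ⟪v x, u x⟫).smul hu)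

/-- normalization -/
def nz (i : ℕ) (v : EE i) : EE i := ‖v‖⁻¹ • v

lemma norm_nz (i : ℕ) (v : EE i) (hv : v ≠ 0) : ‖nz i v‖ = 1 := by
  rw [nz, norm_smul, norm_inv, norm_norm, inv_mul_cancel₀ (norm_ne_zero_iff.mpr hv)]

lemma nz_of_norm_one (i : ℕ) (v : EE i) (hv : ‖v‖ = 1) : nz i v = v := by
  rw [nz, hv, inv_one, one_smul]

lemma continuous_nz (i : ℕ) {X : Type*} [TopologicalSpace X] {f : X → EE i}
    (hf : Continuous f) (h : ∀ x, f x ≠ 0) : Continuous fun x => nz i (f x) := by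
  unfold nz
  exact (hf.norm.inv₀ fun x => norm_ne_zero_iff.mpr (h x)).smul hf

def clampA (t : ℝ) : ℝ := min 1 (max 0 (4 * t + 3))

def clampB (t : ℝ) : ℝ := min 1 (max 0 (-(4 * t) - 1))

@[fun_prop] lemma continuous_clampA : Continuous clampA := by unfold clampA; fun_prop

@[fun_prop] lemma continuous_clampB : Continuous clampB := by unfold clampB; fun_prop

lemma clampA_eq_one {t : ℝ} (h : -(1/2) ≤ t) : clampA t = 1 := by
  rw [clampA, max_eq_right (by linarith), min_eq_left (by linarith)]

lemma clampA_ne_imp {t : ℝ} (h : clampA t ≠ 0) : -(3/4) < t := by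
  by_contra hc
  push_neg at hc
  exact h (by rw [clampA, max_eq_left (by linarith), min_eq_right (by norm_num)])

lemma clampB_eq_one {t : ℝ} (h : t ≤ -(1/2)) : clampB t = 1 := by
  rw [clampB, max_eq_right (by linarith), min_eq_left (by linarith)]

lemma clampB_ne_imp {t : ℝ} (h : clampB t ≠ 0) : t < -(1/4) := by
  by_contra hc
  push_neg at hc
  exact h (by rw [clampB, max_eq_left (by linarith), min_eq_right (by norm_num)])

/-- the distinguished coordinate -/
def tc (i : ℕ) (x : ↥(Metric.sphere (0 : EE i) 1)) : ℝ := ⟪(x : EE i), pE i⟫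

lemma norm_coe (i : ℕ) (x : ↥(Metric.sphere (0 : EE i) 1)) : ‖(x : EE i)‖ = 1 :=
  mem_sphere_zero_iff_norm.mp x.2

lemma coe_ne_zero (i : ℕ) (x : ↥(Metric.sphere (0 : EE i) 1)) : (x : EE i) ≠ 0 := by
  intro h
  have := norm_coe i x
  rw [h, norm_zero] at this
  norm_num at this

def nA (i : ℕ) (s : ℝ) (x : ↥(Metric.sphere (0 : EE i) 1)) : EE i :=
  (1 - s * clampA (tc i x)) • (x : EE i) + (s * clampA (tc i x)) • pE i

lemma inner_nA (i : ℕ) (s : ℝ) (x : ↥(Metric.sphere (0 : EE i) 1)) :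
    ⟪nA i s x, (x : EE i) + pE i⟫ = 1 + tc i x := by
  have hc : ⟪pE i, (x : EE i)⟫ = tc i x := real_inner_comm _ _
  rw [nA, inner_add_left, real_inner_smul_left, real_inner_smul_left,
      inner_add_right, inner_add_right, real_inner_self_eq_norm_sq, norm_coe,
      inner_pE_pE, hc]
  unfold tc
  ring

lemma nA_ne_zero (i : ℕ) (s : ℝ) (x : ↥(Metric.sphere (0 : EE i) 1)) :
    nA i s x ≠ 0 := by
  by_cases hc : s * clampA (tc i x) = 0
  · rw [nA, hc, sub_zero, zero_smul, add_zero, one_smul]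
    exact coe_ne_zero i x
  · intro h
    have h1 : clampA (tc i x) ≠ 0 := fun h0 => hc (by rw [h0, mul_zero])
    have h2 := clampA_ne_imp h1
    have h3 := inner_nA i s x
    rw [h, inner_zero_left] at h3
    linarith

def cB (i : ℕ) (s : ℝ) (x : ↥(Metric.sphere (0 : EE i) 1)) : ℝ :=
  min (2 * s) 1 * clampB (tc i x)

def nB (i : ℕ) (s : ℝ) (x : ↥(Metric.sphere (0 : EE i) 1)) : EE i :=
  (1 - cB i s x) • (x : EE i) - cB i s x • pE i

lemma inner_nB (i : ℕ) (s : ℝ) (x : ↥(Metric.sphere (0 : EE i) 1)) :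
    ⟪nB i s x, (x : EE i) - pE i⟫ = 1 - tc i x := by
  have hc : ⟪pE i, (x : EE i)⟫ = tc i x := real_inner_comm _ _
  rw [nB, inner_sub_left, real_inner_smul_left, real_inner_smul_left,
      inner_sub_right, inner_sub_right, real_inner_self_eq_norm_sq, norm_coe,
      inner_pE_pE, hc]
  unfold tc
  ring

lemma nB_ne_zero (i : ℕ) (s : ℝ) (x : ↥(Metric.sphere (0 : EE i) 1)) :
    nB i s x ≠ 0 := by
  by_cases hc : cB i s x = 0
  · rw [nB, hc, sub_zero, zero_smul, sub_zero, one_smul]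
    exact coe_ne_zero i x
  · intro h
    have h1 : clampB (tc i x) ≠ 0 := fun h0 => hc (by rw [cB, h0, mul_zero])
    have h2 := clampB_ne_imp h1
    have h3 := inner_nB i s x
    rw [h, inner_zero_left] at h3
    linarith

def wE (i : ℕ) (r : ℝ) : EE i := (1 - r) • pE i + r • qE i

lemma wE_ne_zero (i : ℕ) (hi : 1 ≤ i) (r : ℝ) : wE i r ≠ 0 := by
  intro h
  have h1 : ⟪wE i r, pE i⟫ = 1 - r := by
    rw [wE, inner_add_left, real_inner_smul_left, real_inner_smul_left,
        inner_pE_pE, inner_qE_pE i hi]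
    ring
  have h2 : ⟪wE i r, qE i⟫ = r := by
    rw [wE, inner_add_left, real_inner_smul_left, real_inner_smul_left,
        inner_pE_qE i hi, real_inner_self_eq_norm_sq, norm_qE]
    ring
  rw [h, inner_zero_left] at h1 h2
  linarith

lemma continuous_wE (i : ℕ) {X : Type*} [TopologicalSpace X] {f : X → ℝ}
    (hf : Continuous f) : Continuous fun x => wE i (f x) := by
  unfold wE
  fun_prop

/-- The first homotopy: gradual collapse of the region `tc ≥ -1/2` to the base point. -/
def Afun (i : ℕ) (d : unitInterval × ↥(Metric.sphere (0 : EE i) 1)) :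
    ↥(Metric.sphere (0 : EE i) 1) :=
  ⟨nz i (nA i (d.1 : ℝ) d.2),
    mem_sphere_zero_iff_norm.mpr (norm_nz i _ (nA_ne_zero i _ _))⟩

/-- The second homotopy: collapse of the region `tc ≤ -1/2` to the antipode, composed
with a moving double reflection carrying the antipode to the base point. -/
def Bfun (i : ℕ) (hi : 1 ≤ i) (d : unitInterval × ↥(Metric.sphere (0 : EE i) 1)) :
    ↥(Metric.sphere (0 : EE i) 1) :=
  ⟨refl i (nz i (wE i (max (2 * (d.1 : ℝ) - 1) 0)))
      (refl i (pE i) (nz i (nB i (d.1 : ℝ) d.2))),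
    mem_sphere_zero_iff_norm.mpr (by
      rw [norm_refl i _ _ (norm_nz i _ (wE_ne_zero i hi _)),
          norm_refl i _ _ (norm_pE i)]
      exact norm_nz i _ (nB_ne_zero i _ _))⟩

lemma continuous_Afun (i : ℕ) : Continuous (Afun i) := by
  apply Continuous.subtype_mk
  apply continuous_nz
  · unfold nA tc
    have hs : Continuous fun d : unitInterval × ↥(Metric.sphere (0 : EE i) 1) =>
        (d.1 : ℝ) := continuous_subtype_val.comp continuous_fst
    have hcoe : Continuous fun d : unitInterval × ↥(Metric.sphere (0 : EE i) 1) =>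
        (d.2 : EE i) := continuous_subtype_val.comp continuous_snd
    have hg : Continuous fun d : unitInterval × ↥(Metric.sphere (0 : EE i) 1) =>
        (d.1 : ℝ) * clampA ⟪(d.2 : EE i), pE i⟫ :=
      hs.mul (continuous_clampA.comp (hcoe.inner continuous_const))
    exact ((continuous_const.sub hg).smul hcoe).add (hg.smul continuous_const)
  · exact fun d => nA_ne_zero i _ _

lemma continuous_Bfun (i : ℕ) (hi : 1 ≤ i) : Continuous (Bfun i hi) := by
  apply Continuous.subtype_mk
  apply continuous_refl
  · apply continuous_nz
    · apply continuous_wE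
      fun_prop
    · exact fun d => wE_ne_zero i hi _
  · apply continuous_refl i continuous_const
    apply continuous_nz
    · unfold nB cB tc
      have hs : Continuous fun d : unitInterval × ↥(Metric.sphere (0 : EE i) 1) =>
          (d.1 : ℝ) := continuous_subtype_val.comp continuous_fst
      have hcoe : Continuous fun d : unitInterval × ↥(Metric.sphere (0 : EE i) 1) =>
          (d.2 : EE i) := continuous_subtype_val.comp continuous_snd
      have hg : Continuous fun d : unitInterval × ↥(Metric.sphere (0 : EE i) 1) =>
          min (2 * (d.1 : ℝ)) 1 * clampB ⟪(d.2 : EE i), pE i⟫ :=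
        ((continuous_const.mul hs).min continuous_const).mul
          (continuous_clampB.comp (hcoe.inner continuous_const))
      exact ((continuous_const.sub hg).smul hcoe).sub (hg.smul continuous_const)
    · exact fun d => nB_ne_zero i _ _

lemma Afun_zero (i : ℕ) (x : ↥(Metric.sphere (0 : EE i) 1)) : Afun i (0, x) = x := by
  apply Subtype.ext
  show nz i (nA i ((0 : unitInterval) : ℝ) x) = (x : EE i)
  have h0 : ((0 : unitInterval) : ℝ) = 0 := rfl
  rw [h0, nA, zero_mul, sub_zero, one_smul, zero_smul, add_zero]
  exact nz_of_norm_one i _ (norm_coe i x)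

lemma Bfun_zero (i : ℕ) (hi : 1 ≤ i) (x : ↥(Metric.sphere (0 : EE i) 1)) :
    Bfun i hi (0, x) = x := by
  apply Subtype.ext
  show refl i (nz i (wE i (max (2 * ((0 : unitInterval) : ℝ) - 1) 0)))
      (refl i (pE i) (nz i (nB i ((0 : unitInterval) : ℝ) x))) = (x : EE i)
  have h0 : ((0 : unitInterval) : ℝ) = 0 := rfl
  rw [h0]
  have hr : max (2 * (0 : ℝ) - 1) 0 = 0 := by rw [max_eq_right (by norm_num)]
  have hw : wE i 0 = pE i := by rw [wE, sub_zero, one_smul, zero_smul, add_zero]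
  have hcB : cB i 0 x = 0 := by
    rw [cB]
    norm_num
  have hnB : nB i 0 x = (x : EE i) := by
    rw [nB, hcB, sub_zero, one_smul, zero_smul, sub_zero]
  rw [hr, hw, nz_of_norm_one i _ (norm_pE i), hnB,
      nz_of_norm_one i _ (norm_coe i x), refl_refl i _ _ (norm_pE i)]

lemma Afun_basept (i : ℕ) (s : unitInterval) (x : ↥(Metric.sphere (0 : EE i) 1))
    (hx : (x : EE i) = pE i) : Afun i (s, x) = x := by
  apply Subtype.ext
  show nz i (nA i (s : ℝ) x) = (x : EE i)
  have htc : tc i x = 1 := by rw [tc, hx, inner_pE_pE]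
  have hnA : nA i (s : ℝ) x = pE i := by
    rw [nA, htc, clampA_eq_one (by norm_num), mul_one, hx, ← add_smul]
    rw [sub_add_cancel, one_smul]
  rw [hnA, nz_of_norm_one i _ (norm_pE i), hx]

lemma Afun_one (i : ℕ) (x : ↥(Metric.sphere (0 : EE i) 1)) (hx : -(1/2) ≤ tc i x) :
    (Afun i (1, x) : EE i) = pE i := by
  show nz i (nA i ((1 : unitInterval) : ℝ) x) = pE i
  have h1 : ((1 : unitInterval) : ℝ) = 1 := rfl
  have hnA : nA i ((1 : unitInterval) : ℝ) x = pE i := by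
    rw [h1, nA, clampA_eq_one hx, mul_one, sub_self, zero_smul, zero_add, one_smul]
  rw [hnA, nz_of_norm_one i _ (norm_pE i)]

lemma Bfun_one (i : ℕ) (hi : 1 ≤ i) (x : ↥(Metric.sphere (0 : EE i) 1))
    (hx : tc i x ≤ -(1/2)) : (Bfun i hi (1, x) : EE i) = pE i := by
  show refl i (nz i (wE i (max (2 * ((1 : unitInterval) : ℝ) - 1) 0)))
      (refl i (pE i) (nz i (nB i ((1 : unitInterval) : ℝ) x))) = pE i
  have h1 : ((1 : unitInterval) : ℝ) = 1 := rfl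
  rw [h1]
  have hcB : cB i 1 x = 1 := by
    rw [cB, clampB_eq_one hx, mul_one, min_eq_right (by norm_num)]
  have hnB : nB i 1 x = -pE i := by
    rw [nB, hcB, sub_self, zero_smul, one_smul, zero_sub]
  have hnz : nz i (-pE i) = -pE i := by
    apply nz_of_norm_one
    rw [norm_neg]
    exact norm_pE i
  have hrefl1 : refl i (pE i) (-pE i) = pE i := by
    rw [refl, inner_neg_left, inner_pE_pE]
    module
  have hr : max (2 * (1 : ℝ) - 1) 0 = 1 := by norm_num
  have hw : wE i 1 = qE i := by rw [wE, sub_self, zero_smul, one_smul, zero_add]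
  have hrefl2 : refl i (qE i) (pE i) = pE i := by
    rw [refl, inner_pE_qE i hi, mul_zero, zero_smul, sub_zero]
  rw [hnB, hnz, hrefl1, hr, hw, nz_of_norm_one i _ (norm_qE i), hrefl2]

end Stmt13Aux

open Stmt13Aux in
private lemma sphere_AB (i : ℕ) (hi : 1 ≤ i) :
    ∃ A B : C(unitInterval × (pSphere i).carrier, (pSphere i).carrier),
      (∀ x, A (0, x) = x) ∧ (∀ x, B (0, x) = x) ∧
      (∀ s, A (s, (pSphere i).pt) = (pSphere i).pt) ∧
      (∀ x, A (1, x) = (pSphere i).pt ∨ B (1, x) = (pSphere i).pt) := by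
  refine ⟨⟨Afun i, continuous_Afun i⟩, ⟨Bfun i hi, continuous_Bfun i hi⟩,
    Afun_zero i, Bfun_zero i hi, fun s => Afun_basept i s _ rfl, fun x => ?_⟩
  rcases le_total (tc i x) (-(1/2)) with h | h
  · right
    exact Subtype.ext (Bfun_one i hi x h)
  · left
    exact Subtype.ext (Afun_one i x h)

/-! ### STATEMENT 13
For `m, n ≥ 1` the projection `q : Sᵐ × Sⁿ → Sᵐ ∧ Sⁿ ≃ S^{m+n}` collapsing the wedge
induces the trivial homomorphism on all homotopy groups, i.e.
`q ∈ 𝒵^∞(Sᵐ × Sⁿ, S^{m+n})`. -/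
theorem stmt_13 (m n : ℕ) (hm : 1 ≤ m) (hn : 1 ≤ n)
    (e : (ptSmash (pSphere m) (pSphere n)).carrier ≃ₜ (pSphere (m + n)).carrier)
    (he : e (ptSmash (pSphere m) (pSphere n)).pt = (pSphere (m + n)).pt) :
    zClass ⊤ (X := PtSpace.prod (pSphere m) (pSphere n)) (Y := pSphere (m + n))
      ⟨(⟨e, e.continuous⟩ :
          C((ptSmash (pSphere m) (pSphere n)).carrier, (pSphere (m + n)).carrier)).comp
        (ptSmashProj (pSphere m) (pSphere n)).toCM, he⟩ := by
  intro i hi _ g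
  obtain ⟨A, B, hA0, hB0, hAp, hAB1⟩ := sphere_AB i hi
  refine ⟨{ toFun := fun d =>
              e (Quot.mk _ ((g.toCM (A d)).1, (g.toCM (B d)).2)),
            continuous_toFun := e.continuous.comp (continuous_quot_mk.comp
              (((g.toCM.continuous.comp A.continuous).fst).prodMk
                ((g.toCM.continuous.comp B.continuous).snd))),
            map_zero_left := ?_, map_one_left := ?_, prop' := ?_ }⟩
  · intro x
    show e (Quot.mk _ ((g.toCM (A (0, x))).1, (g.toCM (B (0, x))).2)) = _
    rw [hA0, hB0]
    rfl
  · intro x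
    rcases hAB1 x with h | h
    · show e (Quot.mk _ ((g.toCM (A (1, x))).1, (g.toCM (B (1, x))).2)) = _
      rw [h]
      have h1 : (g.toCM (pSphere i).pt).1 = (pSphere m).pt := congrArg Prod.fst g.map_pt
      rw [h1]
      have hq : (Quot.mk _ ((pSphere m).pt, (g.toCM (B (1, x))).2) :
          (ptSmash (pSphere m) (pSphere n)).carrier) = (ptSmash (pSphere m) (pSphere n)).pt :=
        Quot.sound ⟨Or.inl rfl, Or.inl rfl⟩
      rw [hq, he]
      rfl
    · show e (Quot.mk _ ((g.toCM (A (1, x))).1, (g.toCM (B (1, x))).2)) = _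
      rw [h]
      have h2 : (g.toCM (pSphere i).pt).2 = (pSphere n).pt := congrArg Prod.snd g.map_pt
      rw [h2]
      have hq : (Quot.mk _ ((g.toCM (A (1, x))).1, (pSphere n).pt) :
          (ptSmash (pSphere m) (pSphere n)).carrier) = (ptSmash (pSphere m) (pSphere n)).pt :=
        Quot.sound ⟨Or.inr rfl, Or.inl rfl⟩
      rw [hq, he]
      rfl
  · intro t x hx
    have hx' : x = (pSphere i).pt := hx
    subst hx'
    show e (Quot.mk _ ((g.toCM (A (t, (pSphere i).pt))).1,
        (g.toCM (B (t, (pSphere i).pt))).2)) = _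
    rw [hAp t]
    have h1 : (g.toCM (pSphere i).pt).1 = (pSphere m).pt := congrArg Prod.fst g.map_pt
    rw [h1]
    have hq : (Quot.mk _ ((pSphere m).pt, (g.toCM (B (t, (pSphere i).pt))).2) :
        (ptSmash (pSphere m) (pSphere n)).carrier) = (ptSmash (pSphere m) (pSphere n)).pt :=
      Quot.sound ⟨Or.inl rfl, Or.inl rfl⟩
    rw [hq, he]
    show _ = e (Quot.mk _ (g.toCM (pSphere i).pt))
    rw [g.map_pt]
    exact he.symm


end
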